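/- Let G be a finite labeled multidigraph without self-loops on node set N, with edge label function π : E → R. Let L be its Laplacian, the |N|×|N| matrix with off-diagonal entry L_{ij} = Σ_{e : j → i} π(e) and diagonal entry L_{jj} = - Σ_{i ≠ j} L_{ij}. Then for any node N_0 ∈ N, the determinant of the matrix obtained from L by deleting the row and column of N_0 equals (-1)^{|N|-1} times the sum, over all spanning trees τ of G rooted at N_0 (directed so every node has a unique path to N_0), of the product of the labels of the edges of τ. -/

import Mathlib

open scoped Classical

section helpers
variable {V : Type*} [Fintype V] [DecidableEq V]

/-- Matrix of a functional digraph step: row `j` is `δ_j - δ_{g j}`. -/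
noncomputable def Dmat (g : V → Option V) : Matrix V V ℝ :=
  Matrix.of fun j i => (if i = j then (1:ℝ) else 0) - (if some i = g j then 1 else 0)

lemma det_Dmat_acyclic (g : V → Option V) (d : V → ℕ)
    (hd : ∀ j i, g j = some i → d i < d j) :
    (Dmat g).det = 1 := by
  rw [Matrix.det_apply]
  rw [Finset.sum_eq_single (1 : Equiv.Perm V)]
  · have : ∀ i : V, Dmat g i i = 1 := by
      intro i
      have h1 : ¬ (some i = g i) := fun h => lt_irrefl _ (hd i i h.symm)
      simp [Dmat, h1]
    simp [this]
  · intro σ _ hσ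
    have hne : (Finset.univ.filter (fun j : V => σ j ≠ j)).Nonempty := by
      rcases not_forall.mp (fun h => hσ (Equiv.ext fun x => h x)) with ⟨j, hj⟩
      exact ⟨j, by simpa using hj⟩
    obtain ⟨j, hjmem, hjmin⟩ := Finset.exists_min_image _ d hne
    simp only [Finset.mem_filter, Finset.mem_univ, true_and] at hjmem
    have hj1 : σ⁻¹ j ≠ j := by
      intro h; apply hjmem; conv_lhs => rw [← h]
      simp
    have hj2 : σ (σ⁻¹ j) = j := by simp
    have hfac : Dmat g (σ (σ⁻¹ j)) (σ⁻¹ j) = 0 := by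
      rw [hj2]
      have h2 : ¬ (some (σ⁻¹ j) = g j) := by
        intro h
        have hlt : d (σ⁻¹ j) < d j := hd _ _ h.symm
        have hmem : σ⁻¹ j ∈ Finset.univ.filter (fun j : V => σ j ≠ j) :=
          Finset.mem_filter.mpr ⟨Finset.mem_univ _, by
            rw [hj2]; exact fun h' => hj1 h'.symm⟩
        exact absurd (hjmin _ hmem) (not_le.mpr hlt)
      simp only [Dmat, Matrix.of_apply]
      rw [if_neg hj1, if_neg h2]; simp
    have hprod : (∏ i, Dmat g (σ i) i) = 0 :=
      Finset.prod_eq_zero (Finset.mem_univ (σ⁻¹ j)) hfac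
    rw [hprod]; simp
  · simp

lemma det_Dmat_cyclic (g : V → Option V) (C : Finset V) (hC : C.Nonempty)
    (h : V → V) (hgh : ∀ j ∈ C, g j = some (h j))
    (hmaps : ∀ j ∈ C, h j ∈ C) (hinj : Set.InjOn h C) :
    (Dmat g).det = 0 := by
  rw [← Matrix.exists_vecMul_eq_zero_iff]
  refine ⟨fun j => if j ∈ C then (1:ℝ) else 0, ?_, ?_⟩
  · obtain ⟨x, hx⟩ := hC
    intro hzero
    have := congrFun hzero x
    simp [hx] at this
  · funext i
    have himg : C.image h = C := by
      apply Finset.eq_of_subset_of_card_le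
      · intro x hx
        obtain ⟨y, hy, rfl⟩ := Finset.mem_image.mp hx
        exact hmaps y hy
      · rw [Finset.card_image_of_injOn hinj]
    have key : (∑ j ∈ C, if some i = g j then (1:ℝ) else 0)
        = if i ∈ C then 1 else 0 := by
      have heq : ∀ j ∈ C, (if some i = g j then (1:ℝ) else 0)
          = if h j = i then 1 else 0 := by
        intro j hj
        rw [hgh j hj]
        simp [eq_comm, Option.some_inj]
      have himgsum := Finset.sum_image (s := C) (g := h)
        (f := fun y => if y = i then (1:ℝ) else 0)
        (fun x hx y hy hxy => hinj hx hy hxy)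
      rw [Finset.sum_congr rfl heq, ← himgsum, himg, Finset.sum_ite_eq']
    have : ∀ j : V, (if j ∈ C then (1:ℝ) else 0) * Dmat g j i
        = (if j ∈ C then ((if i = j then (1:ℝ) else 0) - (if some i = g j then 1 else 0)) else 0) := by
      intro j
      by_cases hj : j ∈ C <;> simp [Dmat, hj]
    show (∑ j, (if j ∈ C then (1:ℝ) else 0) * Dmat g j i) = 0
    rw [Finset.sum_congr rfl (fun j _ => this j), Finset.sum_ite_mem,
      Finset.univ_inter, Finset.sum_sub_distrib, key]
    simp [Finset.sum_ite_eq, eq_comm]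

end helpers


/-- The (weighted, directed, multigraph) matrix-tree theorem: the principal
minor of the Laplacian obtained by deleting the row and column of a node N₀
equals (-1)^(|N|-1) times the sum over all spanning trees rooted at N₀ of the
products of the edge labels. -/
theorem stmt_10 {N E : Type*} [Fintype N] [DecidableEq N] [Fintype E] [DecidableEq E]
    (s t : E → N) (hloop : ∀ e, s e ≠ t e) (π : E → ℝ)
    (L : Matrix N N ℝ)
    (hoff : ∀ i j : N, i ≠ j →
      L i j = ∑ e ∈ Finset.univ.filter (fun e => s e = j ∧ t e = i), π e)
    (hdiag : ∀ j : N, L j j = -∑ i ∈ Finset.univ.erase j, L i j)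
    (N₀ : N)
    -- a spanning tree rooted at N₀: every node other than N₀ has exactly one
    -- outgoing edge, N₀ has none, and every node reaches N₀
    (IsSpanningTree : Finset E → Prop)
    (hTree : ∀ τ : Finset E, IsSpanningTree τ ↔
      ((∀ v : N, v ≠ N₀ → (τ.filter (fun e => s e = v)).card = 1) ∧
       (τ.filter (fun e => s e = N₀)).card = 0 ∧
       (∀ v : N, Relation.ReflTransGen
          (fun a b => ∃ e ∈ τ, s e = a ∧ t e = b) v N₀))) :
    Matrix.det (L.submatrix (fun i : {v : N // v ≠ N₀} => (i : N))
        (fun j : {v : N // v ≠ N₀} => (j : N))) =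
      (-1 : ℝ) ^ (Fintype.card N - 1) *
        ∑ τ ∈ Finset.univ.filter IsSpanningTree, ∏ e ∈ τ, π e := by
  classical
  set V := {v : N // v ≠ N₀} with hVdef
  let coef : E → V → ℝ := fun e j => if s e = (j:N) then π e else 0
  let A : E → V → ℝ := fun e i =>
    (if (i:N) = s e then 1 else 0) - (if (i:N) = t e then 1 else 0)
  -- entrywise identity
  have hentry : ∀ (i j : V), -(L (i:N) (j:N)) = ∑ e : E, coef e j * A e i := by
    intro i j
    by_cases hij : (i : N) = (j : N)
    · -- diagonal
      have hR : ∀ e : E, coef e j * A e i = if s e = (j:N) then π e else 0 := by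
        intro e
        by_cases hse : s e = (j:N)
        · have h1 : (i:N) = s e := by rw [hse, hij]
          have h2 : ¬ ((i:N) = t e) := by
            rw [hij, ← hse]; exact fun h => hloop e h
          have h2' : ¬ ((j:N) = t e) := fun h => h2 (hij.trans h)
          simp [coef, A, hse, h1, h2, h2']
        · simp [coef, A, hse]
      rw [Finset.sum_congr rfl (fun e _ => hR e)]
      rw [hij, hdiag, neg_neg]
      have hL : ∀ i' ∈ Finset.univ.erase (j:N), L i' (j:N)
          = ∑ e : E, if s e = (j:N) ∧ t e = i' then π e else 0 := by
        intro i' hi'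
        rw [hoff i' (j:N) (Finset.ne_of_mem_erase hi'), Finset.sum_filter]
      rw [Finset.sum_congr rfl hL, Finset.sum_comm]
      refine Finset.sum_congr rfl (fun e _ => ?_)
      by_cases hse : s e = (j:N)
      · have hmem : t e ∈ Finset.univ.erase (j:N) :=
          Finset.mem_erase.mpr ⟨fun h => hloop e (hse.trans h.symm), Finset.mem_univ _⟩
        rw [if_pos hse]
        have : ∀ x ∈ Finset.univ.erase (j:N),
            (if s e = (j:N) ∧ t e = x then π e else 0) = if t e = x then π e else 0 := by
          intro x _; simp [hse]
        rw [Finset.sum_congr rfl this,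
          Finset.sum_ite_eq (Finset.univ.erase (j:N)) (t e) (fun _ => π e)]
        exact if_pos hmem
      · simp [hse]
    · -- off-diagonal
      have hR : ∀ e : E, coef e j * A e i
          = -(if s e = (j:N) ∧ t e = (i:N) then π e else 0) := by
        intro e
        by_cases hse : s e = (j:N)
        · have h1 : ¬ ((i:N) = s e) := by rw [hse]; exact hij
          have h3 : ¬ (t e = (j:N)) := fun h => hloop e (hse.trans h.symm)
          by_cases hte : t e = (i:N)
          · simp [coef, A, hse, h1, hij, hte]
          · have h2 : ¬ ((i:N) = t e) := fun h => hte h.symm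
            simp [coef, A, hse, h1, h2, hte, hij]
        · simp [coef, A, hse]
      rw [Finset.sum_congr rfl (fun e _ => hR e), Finset.sum_neg_distrib,
        hoff (i:N) (j:N) hij, Finset.sum_filter]
  -- matrix identity
  have hsub : L.submatrix (fun i : V => (i : N)) (fun j : V => (j : N))
      = - Matrix.of (fun i j : V => ∑ e : E, coef e j * A e i) := by
    ext i j
    simp only [Matrix.submatrix_apply, Matrix.neg_apply, Matrix.of_apply]
    rw [← hentry i j, neg_neg]
  have hcardV : Fintype.card V = Fintype.card N - 1 := by
    simp [hVdef, Fintype.card_subtype_compl]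
  rw [hsub, Matrix.det_neg, hcardV]
  congr 1
  -- now: det (of fun i j => ∑ e, coef e j * A e i) = ∑ τ spanning, ∏ π
  rw [← Matrix.det_transpose]
  have htr : Matrix.transpose (Matrix.of (fun i j : V => ∑ e : E, coef e j * A e i))
      = Matrix.of (fun j : V => ∑ e : E, coef e j • A e) := by
    ext j i
    simp [Matrix.transpose_apply, Finset.sum_apply]
  rw [htr]
  have hdet : (Matrix.of (fun j : V => ∑ e : E, coef e j • A e)).det
      = ∑ f : V → E, (Matrix.detRowAlternating :
          (V → ℝ) [⋀^V]→ₗ[ℝ] ℝ) (fun j => coef (f j) j • A (f j)) := by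
    have h0 : (Matrix.of (fun j : V => ∑ e : E, coef e j • A e)).det
        = (Matrix.detRowAlternating : (V → ℝ) [⋀^V]→ₗ[ℝ] ℝ)
            (fun j : V => ∑ e : E, coef e j • A e) := rfl
    rw [h0]
    exact (Matrix.detRowAlternating : (V → ℝ) [⋀^V]→ₗ[ℝ] ℝ).toMultilinearMap.map_sum
      (g := fun (j : V) (e : E) => coef e j • A e)
  rw [hdet]
  -- pull out the scalar coefficients
  have hsmul : ∀ f : V → E,
      (Matrix.detRowAlternating : (V → ℝ) [⋀^V]→ₗ[ℝ] ℝ) (fun j => coef (f j) j • A (f j))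
      = (∏ j : V, coef (f j) j) * (Matrix.of fun (j i : V) => A (f j) i).det := by
    intro f
    have h1 := (Matrix.detRowAlternating : (V → ℝ) [⋀^V]→ₗ[ℝ] ℝ).toMultilinearMap.map_smul_univ
      (fun j => coef (f j) j) (fun j => A (f j))
    rw [smul_eq_mul] at h1
    exact h1
  rw [Finset.sum_congr rfl (fun f _ => hsmul f)]
  -- the functional-digraph step associated to a choice of edges
  let gf : (V → E) → V → Option V := fun f j =>
    if h : t (f j) = N₀ then none else some ⟨t (f j), h⟩
  let Good : (V → E) → Prop := fun f => ∀ j : V, s (f j) = (j : N)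
  -- for good f the edge-incidence matrix is `Dmat (gf f)`
  have hDf : ∀ f : V → E, Good f →
      (Matrix.of fun (j i : V) => A (f j) i) = Dmat (gf f) := by
    intro f hf
    ext j i
    have hA1 : (if (i:N) = s (f j) then (1:ℝ) else 0) = if i = j then 1 else 0 := by
      rw [hf j]
      by_cases h : i = j
      · simp [h]
      · have : ¬ ((i:N) = (j:N)) := fun hh => h (Subtype.ext hh)
        simp [h, this]
    have hA2 : (if (i:N) = t (f j) then (1:ℝ) else 0)
        = if some i = gf f j then 1 else 0 := by
      by_cases h : t (f j) = N₀
      · have h2 : ¬ ((i:N) = t (f j)) := fun hh => i.2 (hh.trans h)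
        simp [gf, h, h2, i.2]
      · have : gf f j = some ⟨t (f j), h⟩ := dif_neg h
        rw [this]
        by_cases h2 : (i:N) = t (f j)
        · have h3 : i = ⟨t (f j), h⟩ := Subtype.ext h2
          simp [h2, h3]
        · have : ¬ (i = ⟨t (f j), h⟩) := fun hh => h2 (by rw [hh])
          simp [h2, this]
    show A (f j) i = Dmat (gf f) j i
    simp only [A, Dmat, Matrix.of_apply, hA1, hA2]
  -- basic facts about τ f := image f for good f
  have himgcard : ∀ f : V → E, Good f →
      (∀ v : N, v ≠ N₀ → ((Finset.univ.image f).filter (fun e => s e = v)).card = 1) ∧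
      ((Finset.univ.image f).filter (fun e => s e = N₀)).card = 0 := by
    intro f hf
    constructor
    · intro v hv
      have : (Finset.univ.image f).filter (fun e => s e = v) = {f ⟨v, hv⟩} := by
        ext e
        simp only [Finset.mem_filter, Finset.mem_image, Finset.mem_univ, true_and,
          Finset.mem_singleton]
        constructor
        · rintro ⟨⟨j, rfl⟩, hs⟩
          have : j = ⟨v, hv⟩ := Subtype.ext (by rw [← hf j, hs])
          rw [this]
        · rintro rfl
          exact ⟨⟨_, rfl⟩, hf _⟩
      rw [this, Finset.card_singleton]
    · rw [Finset.card_eq_zero]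
      ext e
      simp only [Finset.mem_filter, Finset.mem_image, Finset.mem_univ, true_and,
        Finset.notMem_empty, iff_false, not_and]
      rintro ⟨j, rfl⟩ hs
      exact j.2 (by rw [← hf j, hs])
  -- the deterministic step function on N
  have key : ∀ f : V → E, Good f →
      (Matrix.of fun (j i : V) => A (f j) i).det
        = if IsSpanningTree (Finset.univ.image f) then 1 else 0 := by
    intro f hf
    rw [hDf f hf]
    set F : N → N := fun v => if h : v = N₀ then v else t (f ⟨v, h⟩) with hF
    set rel : N → N → Prop :=
      fun a b => ∃ e ∈ Finset.univ.image f, s e = a ∧ t e = b with hrel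
    have hrel_imp : ∀ a b, rel a b → a ≠ N₀ ∧ b = F a := by
      rintro a b ⟨e, he, hsa, htb⟩
      obtain ⟨j, -, rfl⟩ := Finset.mem_image.mp he
      have hj : a = (j : N) := by rw [← hsa, hf j]
      subst hj
      refine ⟨j.2, ?_⟩
      rw [← htb, hF]
      simp only [dif_neg j.2]; rfl
    have lem2 : ∀ v : N, Relation.ReflTransGen rel v N₀ → ∃ k, F^[k] v = N₀ := by
      intro v h
      induction h using Relation.ReflTransGen.head_induction_on with
      | refl => exact ⟨0, rfl⟩
      | head hab _ ih =>
        obtain ⟨k, hk⟩ := ih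
        obtain ⟨-, hb⟩ := hrel_imp _ _ hab
        exact ⟨k + 1, by rw [Function.iterate_succ_apply, ← hb, hk]⟩
    have lem3 : ∀ (k : ℕ) (v : N), F^[k] v = N₀ → Relation.ReflTransGen rel v N₀ := by
      intro k
      induction k with
      | zero => intro v hv; exact hv ▸ Relation.ReflTransGen.refl
      | succ k ih =>
        intro v hv
        by_cases hv0 : v = N₀
        · exact hv0 ▸ Relation.ReflTransGen.refl
        · have hrel1 : rel v (F v) := by
            refine ⟨f ⟨v, hv0⟩, Finset.mem_image_of_mem f (Finset.mem_univ _), hf _, ?_⟩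
            rw [hF]; simp [dif_neg hv0]
          exact Relation.ReflTransGen.head hrel1
            (ih (F v) (by rwa [← Function.iterate_succ_apply]))
    by_cases hsp : IsSpanningTree (Finset.univ.image f)
    · rw [if_pos hsp]
      have hreach := ((hTree _).mp hsp).2.2
      have hex : ∀ v : V, ∃ k, F^[k] (v : N) = N₀ := fun v => lem2 _ (hreach v)
      refine det_Dmat_acyclic _ (fun v => Nat.find (hex v)) ?_
      intro j i hgi
      simp only [gf] at hgi
      have hne : ¬ (t (f j) = N₀) := by
        by_contra h
        rw [dif_pos h] at hgi
        cases hgi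
      rw [dif_neg hne] at hgi
      have hi : (i : N) = t (f j) := by
        have := Option.some_inj.mp hgi
        rw [← this]
      have hFj : F (j : N) = t (f j) := by
        rw [hF]; simp only [dif_neg j.2]; rfl
      have hk := Nat.find_spec (hex j)
      have hkpos : Nat.find (hex j) ≠ 0 := by
        intro h0
        rw [h0] at hk
        exact j.2 hk
      obtain ⟨k', hk'⟩ := Nat.exists_eq_succ_of_ne_zero hkpos
      have : F^[k'] ((i : N)) = N₀ := by
        rw [hi, ← hFj, ← Function.iterate_succ_apply, ← hk', hk]
      have hle : Nat.find (hex i) ≤ k' := Nat.find_le this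
      have hgoal : Nat.find (hex i) < Nat.find (hex j) := by omega
      exact hgoal
    · rw [if_neg hsp]
      -- find a non-reaching vertex, hence a cycle
      have : ∃ v : N, ¬ Relation.ReflTransGen rel v N₀ := by
        by_contra hall
        push_neg at hall
        exact hsp ((hTree _).mpr ⟨(himgcard f hf).1, (himgcard f hf).2, hall⟩)
      obtain ⟨v, hnr⟩ := this
      have horb : ∀ k, F^[k] v ≠ N₀ := fun k h => hnr (lem3 k v h)
      let u : ℕ → V := fun k => ⟨F^[k] v, horb k⟩
      have hu : ∀ k, gf f (u k) = some (u (k + 1)) := by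
        intro k
        have ht' : t (f (u k)) = F^[k+1] v := by
          rw [Function.iterate_succ_apply']
          show t (f (u k)) = F (F^[k] v)
          rw [hF]
          exact (dif_neg (horb k) : (if h : F^[k] v = N₀ then F^[k] v else t (f ⟨F^[k] v, h⟩)) = _).symm
        have hne : ¬ (t (f (u k)) = N₀) := by rw [ht']; exact horb (k+1)
        show (if h : t (f (u k)) = N₀ then none else some ⟨t (f (u k)), h⟩) = some (u (k+1))
        rw [dif_neg hne]
        exact congrArg some (Subtype.ext ht')
      let h : V → V := fun x => (gf f x).getD x
      have hgu : ∀ k, h (u k) = u (k + 1) := by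
        intro k
        show (gf f (u k)).getD (u k) = u (k+1)
        rw [hu k]
        rfl
      have hiter : ∀ (q i : ℕ), h^[q] (u i) = u (i + q) := by
        intro q
        induction q with
        | zero => intro i; simp
        | succ q ih =>
          intro i
          rw [Function.iterate_succ_apply, hgu, ih, Nat.add_comm i 1, Nat.add_assoc]
          congr 1
          omega
      obtain ⟨a, b, hab, huab⟩ := Finite.exists_ne_map_eq_of_infinite u
      -- wlog a < b
      obtain ⟨k, m, hkm, hukm⟩ : ∃ k m, k < m ∧ u k = u m := by
        rcases lt_or_gt_of_ne hab with h' | h'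
        · exact ⟨a, b, h', huab⟩
        · exact ⟨b, a, h', huab.symm⟩
      set p := m - k with hp
      have hppos : 0 < p := by omega
      have hFper : F^[m] v = F^[k] v := (congrArg Subtype.val hukm).symm
      have hushift : ∀ i, u (k + i + p) = u (k + i) := by
        intro i
        apply Subtype.ext
        show F^[k + i + p] v = F^[k + i] v
        have h1 : k + i + p = i + m := by omega
        have h2 : k + i = i + k := by omega
        rw [h1, h2, Function.iterate_add_apply, Function.iterate_add_apply, hFper]
      let C : Finset V := (Finset.range p).image (fun i => u (k + i))
      have hCne : C.Nonempty := ⟨u (k + 0), Finset.mem_image_of_mem _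
        (Finset.mem_range.mpr hppos)⟩
      have hCmem : ∀ x ∈ C, ∃ i < p, x = u (k + i) := by
        intro x hx
        obtain ⟨i, hi, rfl⟩ := Finset.mem_image.mp hx
        exact ⟨i, Finset.mem_range.mp hi, rfl⟩
      have hpfix : ∀ x ∈ C, h^[p] x = x := by
        intro x hx
        obtain ⟨i, hi, rfl⟩ := hCmem x hx
        rw [hiter]
        exact hushift i
      refine det_Dmat_cyclic (gf f) C hCne h ?_ ?_ ?_
      · intro j hj
        obtain ⟨i, hi, rfl⟩ := hCmem j hj
        rw [hgu, hu]
      · intro j hj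
        obtain ⟨i, hi, rfl⟩ := hCmem j hj
        rw [hgu]
        by_cases hip : i + 1 < p
        · exact Finset.mem_image_of_mem _ (Finset.mem_range.mpr hip)
        · have hip' : i + 1 = p := by omega
          have heq : u (k + i + 1) = u (k + 0) := by
            rw [show k + i + 1 = k + 0 + p by omega]
            exact hushift 0
          rw [heq]
          exact Finset.mem_image_of_mem _ (Finset.mem_range.mpr hppos)
      · intro x hx y hy hxy
        have hx' := hpfix x hx
        have hy' := hpfix y hy
        obtain ⟨p', hp'⟩ := Nat.exists_eq_succ_of_ne_zero (Nat.pos_iff_ne_zero.mp hppos)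
        rw [hp'] at hx' hy'
        rw [← hx', ← hy', Function.iterate_succ_apply, Function.iterate_succ_apply, hxy]
  -- kill the terms that are not good spanning forests
  have hzero : ∀ f : V → E, f ∈ (Finset.univ : Finset (V → E)) →
      ((∏ j : V, coef (f j) j) * (Matrix.of fun (j i : V) => A (f j) i).det ≠ 0) →
      (Good f ∧ IsSpanningTree (Finset.univ.image f)) := by
    intro f _ hne
    have hgood : Good f := by
      by_contra hg
      obtain ⟨j, hj⟩ := not_forall.mp hg
      have hc : coef (f j) j = 0 := if_neg hj
      exact hne (by
        rw [Finset.prod_eq_zero (f := fun j : V => coef (f j) j) (Finset.mem_univ j) hc,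
          zero_mul])
    refine ⟨hgood, ?_⟩
    by_contra hsp
    rw [key f hgood, if_neg hsp, mul_zero] at hne
    exact hne rfl
  rw [← Finset.sum_filter_of_ne hzero]
  have hval : ∀ f ∈ Finset.univ.filter
      (fun f : V → E => Good f ∧ IsSpanningTree (Finset.univ.image f)),
      (∏ j : V, coef (f j) j) * (Matrix.of fun (j i : V) => A (f j) i).det
        = ∏ e ∈ Finset.univ.image f, π e := by
    intro f hfm
    rw [Finset.mem_filter] at hfm
    obtain ⟨-, hgood, hsp⟩ := hfm
    rw [key f hgood, if_pos hsp, mul_one]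
    have hinj : Function.Injective f := by
      intro a b hab
      apply Subtype.ext
      rw [← hgood a, ← hgood b, hab]
    rw [Finset.prod_image (fun a _ b _ hab => hinj hab)]
    exact Finset.prod_congr rfl (fun j _ => by simp [coef, hgood j])
  rw [Finset.sum_congr rfl hval]
  refine Finset.sum_bij (fun f _ => Finset.univ.image f) ?_ ?_ ?_ ?_
  · intro f hfm
    rw [Finset.mem_filter] at hfm ⊢
    exact ⟨Finset.mem_univ _, hfm.2.2⟩
  · intro f₁ hm₁ f₂ hm₂ himg
    have himg' : Finset.univ.image f₁ = Finset.univ.image f₂ := himg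
    rw [Finset.mem_filter] at hm₁ hm₂
    funext j
    have h1 : f₁ j ∈ Finset.univ.image f₂ := by
      rw [← himg']; exact Finset.mem_image_of_mem _ (Finset.mem_univ _)
    obtain ⟨j', -, hj'⟩ := Finset.mem_image.mp h1
    have : j' = j := Subtype.ext (by rw [← hm₂.2.1 j', hj', hm₁.2.1 j])
    rw [← hj', this]
  · intro τ hτ
    rw [Finset.mem_filter] at hτ
    obtain ⟨-, hτsp⟩ := hτ
    obtain ⟨h1, h0, hreach⟩ := (hTree τ).mp hτsp
    have hchoose : ∀ j : V, ∃ a, τ.filter (fun e => s e = (j:N)) = {a} :=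
      fun j => Finset.card_eq_one.mp (h1 (j : N) j.2)
    let f : V → E := fun j => (hchoose j).choose
    have hfj : ∀ j : V, f j ∈ τ ∧ s (f j) = (j : N) := by
      intro j
      have := (hchoose j).choose_spec
      have hm : f j ∈ τ.filter (fun e => s e = (j:N)) := by
        rw [this]; exact Finset.mem_singleton_self _
      exact ⟨(Finset.mem_filter.mp hm).1, (Finset.mem_filter.mp hm).2⟩
    have hgood : Good f := fun j => (hfj j).2
    have himg : Finset.univ.image f = τ := by
      ext e
      constructor
      · intro he
        obtain ⟨j, -, rfl⟩ := Finset.mem_image.mp he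
        exact (hfj j).1
      · intro he
        have hsne : s e ≠ N₀ := by
          intro h
          have : e ∈ τ.filter (fun e => s e = N₀) := Finset.mem_filter.mpr ⟨he, h⟩
          rw [Finset.card_eq_zero.mp h0] at this
          exact Finset.notMem_empty _ this
        have hm : e ∈ τ.filter (fun e' => s e' = s e) := Finset.mem_filter.mpr ⟨he, rfl⟩
        have := (hchoose ⟨s e, hsne⟩).choose_spec
        rw [this] at hm
        rw [Finset.mem_singleton] at hm
        rw [hm]
        exact Finset.mem_image_of_mem _ (Finset.mem_univ _)
    refine ⟨f, ?_, himg⟩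
    rw [Finset.mem_filter]
    exact ⟨Finset.mem_univ _, hgood, by rw [himg]; exact hτsp⟩
  · intro f hfm
    rfl
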